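/- C validates the connexive theses: for all formulas A and B, the sequents ⇒ ∼(∼A → A) (Aristotle's thesis AT), ⇒ ∼(A → ∼A) (AT'), ⇒ (A → B) → ∼(A → ∼B) (Boethius' thesis BT), and ⇒ (A → ∼B) → ∼(A → B) (BT') are all derivable in G3C. -/
import Mathlib


/-- Formulas of the connexive logic C: propositional variables, strong
negation `∼`, conjunction, disjunction and implication. -/
inductive Formula : Type
  | var : Nat → Formula
  | snot : Formula → Formula
  | and : Formula → Formula → Formula
  | or : Formula → Formula → Formula
  | imp : Formula → Formula → Formula
deriving DecidableEq
/-- Derivability of sequents `Γ ⇒ A` (with `Γ` a finite multiset of formulas)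
in the sequent calculus `G3C` for the connexive logic `C`. -/
inductive Gder : Multiset Formula → Formula → Prop
  | ax {Γ n} : Gder (.var n ::ₘ Γ) (.var n)
  | axSnot {Γ n} : Gder (.snot (.var n) ::ₘ Γ) (.snot (.var n))
  | andR {Γ A B} : Gder Γ A → Gder Γ B → Gder Γ (.and A B)
  | andL {Γ A B C} : Gder (A ::ₘ B ::ₘ Γ) C → Gder (.and A B ::ₘ Γ) C
  | orR₁ {Γ A B} : Gder Γ A → Gder Γ (.or A B)
  | orR₂ {Γ A B} : Gder Γ B → Gder Γ (.or A B)
  | orL {Γ A B C} : Gder (A ::ₘ Γ) C → Gder (B ::ₘ Γ) C → Gder (.or A B ::ₘ Γ) C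
  | impR {Γ A B} : Gder (A ::ₘ Γ) B → Gder Γ (.imp A B)
  | impL {Γ A B C} : Gder (.imp A B ::ₘ Γ) A → Gder (B ::ₘ Γ) C → Gder (.imp A B ::ₘ Γ) C
  | snotSnotR {Γ A} : Gder Γ A → Gder Γ (.snot (.snot A))
  | snotSnotL {Γ A C} : Gder (A ::ₘ Γ) C → Gder (.snot (.snot A) ::ₘ Γ) C
  | snotAndR₁ {Γ A B} : Gder Γ (.snot A) → Gder Γ (.snot (.and A B))
  | snotAndR₂ {Γ A B} : Gder Γ (.snot B) → Gder Γ (.snot (.and A B))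
  | snotAndL {Γ A B C} : Gder (.snot A ::ₘ Γ) C → Gder (.snot B ::ₘ Γ) C →
      Gder (.snot (.and A B) ::ₘ Γ) C
  | snotOrR {Γ A B} : Gder Γ (.snot A) → Gder Γ (.snot B) → Gder Γ (.snot (.or A B))
  | snotOrL {Γ A B C} : Gder (.snot A ::ₘ .snot B ::ₘ Γ) C → Gder (.snot (.or A B) ::ₘ Γ) C
  | snotImpR {Γ A B} : Gder (A ::ₘ Γ) (.snot B) → Gder Γ (.snot (.imp A B))
  | snotImpL {Γ A B C} : Gder (.snot (.imp A B) ::ₘ Γ) A → Gder (.snot B ::ₘ Γ) C →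
      Gder (.snot (.imp A B) ::ₘ Γ) C

lemma Gid : ∀ (A : Formula) (Γ : Multiset Formula),
    Gder (A ::ₘ Γ) A ∧ Gder (.snot A ::ₘ Γ) (.snot A) := by
  intro A
  induction A with
  | var n => exact fun Γ => ⟨.ax, .axSnot⟩
  | snot A ih =>
    intro Γ
    refine ⟨(ih Γ).2, .snotSnotL (.snotSnotR (ih Γ).1)⟩
  | and A B ihA ihB =>
    intro Γ
    constructor
    · refine .andL (.andR (ihA _).1 ?_)
      rw [Multiset.cons_swap]
      exact (ihB _).1
    · exact .snotAndL (.snotAndR₁ (ihA _).2) (.snotAndR₂ (ihB _).2)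
  | or A B ihA ihB =>
    intro Γ
    constructor
    · exact .orL (.orR₁ (ihA _).1) (.orR₂ (ihB _).1)
    · refine .snotOrL (.snotOrR (ihA _).2 ?_)
      rw [Multiset.cons_swap]
      exact (ihB _).2
  | imp A B ihA ihB =>
    intro Γ
    constructor
    · refine .impR ?_
      rw [Multiset.cons_swap]
      refine .impL ?_ (ihB _).1
      rw [Multiset.cons_swap]
      exact (ihA _).1
    · refine .snotImpR ?_
      rw [Multiset.cons_swap]
      refine .snotImpL ?_ (ihB _).2
      rw [Multiset.cons_swap]
      exact (ihA _).1

/-- `C` validates the connexive theses: Aristotle's theses `∼(∼A → A)` and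
`∼(A → ∼A)`, and Boethius' theses `(A → B) → ∼(A → ∼B)` and
`(A → ∼B) → ∼(A → B)`, are all derivable in `G3C`. -/
theorem C_connexive_theses (A B : Formula) :
    Gder 0 (.snot (.imp (.snot A) A)) ∧
    Gder 0 (.snot (.imp A (.snot A))) ∧
    Gder 0 (.imp (.imp A B) (.snot (.imp A (.snot B)))) ∧
    Gder 0 (.imp (.imp A (.snot B)) (.snot (.imp A B))) := by
  refine ⟨.snotImpR (Gid (.snot A) 0).1, .snotImpR (.snotSnotR (Gid A 0).1), ?_, ?_⟩
  · refine .impR (.snotImpR ?_)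
    rw [Multiset.cons_swap]
    refine .impL ?_ (.snotSnotR (Gid B _).1)
    rw [Multiset.cons_swap]
    exact (Gid A _).1
  · refine .impR (.snotImpR ?_)
    rw [Multiset.cons_swap]
    refine .impL ?_ (Gid B _).2
    rw [Multiset.cons_swap]
    exact (Gid A _).1
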